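/- Let n ≥ 1, let C, c > 0, and for λ > 0 define the kernel bound k_λ(x,t,y,s) = 1_{(0,∞)}(t-s) · C λ^{-2} (t-s)^{-n/2} e^{-(t-s)/λ²} e^{-c|x-y|²/(t-s)} on ℝ^n × ℝ × ℝ^n × ℝ. Then the m-fold convolution (in the variables (x,t)) of k_λ with itself satisfies the bound k_λ^{*m}(x,t,y,s) ≤ C' 1_{(0,∞)}(t-s) λ^{-2m} (t-s)^{-n/2 + m - 1} e^{-(t-s)/λ²} e^{-c'|x-y|²/(t-s)}, where C', c' > 0 depend only on n, m, C, c. -/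

import Mathlib

open MeasureTheory Real

/-- The Gaussian-type kernel bound `k_λ(x,t,y,s)`. -/
noncomputable def gaussKer (n : ℕ) (C c lam : ℝ)
    (p q : (Fin n → ℝ) × ℝ) : ℝ :=
  if 0 < p.2 - q.2 then
    C * lam ^ (-2 : ℤ) * (p.2 - q.2) ^ (-(n : ℝ) / 2) *
      Real.exp (-(p.2 - q.2) / lam ^ 2) *
      Real.exp (-c * ‖p.1 - q.1‖ ^ 2 / (p.2 - q.2))
  else 0

/-- `iterConv k m` is the `(m+1)`-fold convolution of the kernel `k` with itself
in the variables `(x,t)`. -/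
noncomputable def iterConv {n : ℕ}
    (k : (Fin n → ℝ) × ℝ → (Fin n → ℝ) × ℝ → ℝ) :
    ℕ → ((Fin n → ℝ) × ℝ → (Fin n → ℝ) × ℝ → ℝ)
  | 0 => k
  | (m + 1) => fun p q => ∫ z : (Fin n → ℝ) × ℝ, k p z * iterConv k m z q

lemma sq_div_ineq' {a b : ℝ} (ha : 0 < a) (hb : 0 < b) (u v : ℝ) :
    (u + v)^2 / (a + b) ≤ u^2/a + v^2/b := by
  rw [div_add_div _ _ (ne_of_gt ha) (ne_of_gt hb), div_le_div_iff₀ (by positivity) (by positivity)]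
  nlinarith [sq_nonneg (b*u - a*v), mul_pos ha hb, sq_nonneg (u+v), ha.le, hb.le]

lemma pi_norm_attained (n : ℕ) (hn : 1 ≤ n) (v : Fin n → ℝ) : ∃ i, ‖v‖ = |v i| := by
  have hne : (Finset.univ : Finset (Fin n)).Nonempty := ⟨⟨0, hn⟩, Finset.mem_univ _⟩
  obtain ⟨i, _, hi⟩ := Finset.exists_mem_eq_sup Finset.univ hne fun b => ‖v b‖₊
  refine ⟨i, ?_⟩
  rw [Pi.norm_def, hi]
  simp [Real.norm_eq_abs]

lemma complete_sq {α β : ℝ} (hα : 0 < α) (hβ : 0 < β) (x y w : ℝ) :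
    (α+β) * (w - (α*x+β*y)/(α+β))^2 ≤ α*(x-w)^2 + β*(w-y)^2 := by
  have hd : 0 < α + β := by linarith
  have h1 : (w - (α*x+β*y)/(α+β)) = ((α+β)*w - (α*x+β*y))/(α+β) := by field_simp
  rw [h1, div_pow, mul_div_assoc']
  rw [div_le_iff₀ (by positivity)]
  have h2 : ((α+β)*w - (α*x+β*y))^2 ≤ (α+β) * (α*(x-w)^2 + β*(w-y)^2) := by
    nlinarith [mul_nonneg (mul_nonneg hα.le hβ.le) (sq_nonneg (x-y))]
  calc (α+β) * ((α+β)*w - (α*x+β*y))^2 ≤ (α+β) * ((α+β) * (α*(x-w)^2 + β*(w-y)^2)) :=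
        mul_le_mul_of_nonneg_left h2 hd.le
    _ = (α*(x-w)^2 + β*(w-y)^2) * ((α+β)^2) := by ring

lemma gauss_shift_integrable {d : ℝ} (hd : 0 < d) (ζ : ℝ) :
    Integrable (fun w : ℝ => exp (-d*(w-ζ)^2)) := by
  have := (integrable_exp_neg_mul_sq hd).comp_sub_right ζ
  simpa using this

lemma gauss_shift_integral (d : ℝ) (ζ : ℝ) :
    ∫ w : ℝ, exp (-d*(w-ζ)^2) = Real.sqrt (π/d) := by
  rw [← integral_gaussian d]
  exact integral_sub_right_eq_self (fun w => exp (-d*w^2)) ζ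

lemma coord_sq_le_norm_sq {n : ℕ} (v : Fin n → ℝ) (i : Fin n) : (v i)^2 ≤ ‖v‖^2 := by
  have h := norm_le_pi_norm v i
  have h0 : (0:ℝ) ≤ ‖v i‖ := norm_nonneg _
  calc (v i)^2 = ‖v i‖^2 := by rw [Real.norm_eq_abs, sq_abs]
    _ ≤ ‖v‖^2 := by nlinarith [norm_nonneg v]

lemma pi_gauss_conv (n : ℕ) (hn : 1 ≤ n) {γ a b : ℝ} (hγ : 0 < γ) (ha : 0 < a) (hb : 0 < b)
    (x y : Fin n → ℝ) :
    ∫⁻ w : Fin n → ℝ, ENNReal.ofReal (exp (-γ*‖x-w‖^2/a) * exp (-γ*‖w-y‖^2/b))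
      ≤ ENNReal.ofReal ((2*π*(n:ℝ)*a*b/(γ*(a+b)))^((n:ℝ)/2) *
          exp (-(γ/2)*‖x-y‖^2/(a+b))) := by
  have hn0 : (0:ℝ) < n := by exact_mod_cast hn
  set α : ℝ := γ/(2*n*a) with hαdef
  set β : ℝ := γ/(2*n*b) with hβdef
  have hα : 0 < α := by positivity
  have hβ : 0 < β := by positivity
  have hd : 0 < α + β := by linarith
  set ζ : Fin n → ℝ := fun i => (α*(x i)+β*(y i))/(α+β) with hζdef
  have hpoint : ∀ w : Fin n → ℝ, exp (-γ*‖x-w‖^2/a) * exp (-γ*‖w-y‖^2/b) ≤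
      exp (-(γ/2)*‖x-y‖^2/(a+b)) * ∏ i, exp (-(α+β)*(w i - ζ i)^2) := by
    intro w
    rw [← Real.exp_sum, ← Real.exp_add, ← Real.exp_add]
    apply Real.exp_le_exp.2
    have part1 : (γ/2)*(‖x-y‖^2/(a+b)) ≤ (γ/2)*(‖x-w‖^2/a + ‖w-y‖^2/b) := by
      apply mul_le_mul_of_nonneg_left _ (by positivity)
      obtain ⟨i, hi⟩ := pi_norm_attained n hn (x - y)
      have h1 : ‖x-y‖^2 = ((x i - w i) + (w i - y i))^2 := by
        rw [hi, sq_abs, Pi.sub_apply]; ring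
      rw [h1]
      calc ((x i - w i) + (w i - y i))^2/(a+b)
          ≤ (x i - w i)^2/a + (w i - y i)^2/b := sq_div_ineq' ha hb _ _
        _ ≤ ‖x-w‖^2/a + ‖w-y‖^2/b := by
            gcongr ?u / a + ?v / b
            · simpa [Pi.sub_apply] using coord_sq_le_norm_sq (x-w) i
            · simpa [Pi.sub_apply] using coord_sq_le_norm_sq (w-y) i
    have part2 : ∑ i, (α+β)*(w i - ζ i)^2 ≤ (γ/2)*(‖x-w‖^2/a) + (γ/2)*(‖w-y‖^2/b) := by
      calc ∑ i, (α+β)*(w i - ζ i)^2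
          ≤ ∑ i, (α*(x i - w i)^2 + β*(w i - y i)^2) := by
            apply Finset.sum_le_sum
            intro i _
            simpa [hζdef] using complete_sq hα hβ (x i) (y i) (w i)
        _ ≤ ∑ _i : Fin n, (α*‖x-w‖^2 + β*‖w-y‖^2) := by
            apply Finset.sum_le_sum
            intro i _
            gcongr α * ?u2 + β * ?v2
            · simpa [Pi.sub_apply] using coord_sq_le_norm_sq (x-w) i
            · simpa [Pi.sub_apply] using coord_sq_le_norm_sq (w-y) i
        _ = (n:ℝ)*(α*‖x-w‖^2 + β*‖w-y‖^2) := by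
            simp [Finset.sum_const, nsmul_eq_mul]; ring
        _ = (γ/2)*(‖x-w‖^2/a) + (γ/2)*(‖w-y‖^2/b) := by
            rw [hαdef, hβdef]; field_simp
    have e1 : -γ*‖x-w‖^2/a = -((γ/2)*(‖x-w‖^2/a)) - (γ/2)*(‖x-w‖^2/a) := by ring
    have e2 : -γ*‖w-y‖^2/b = -((γ/2)*(‖w-y‖^2/b)) - (γ/2)*(‖w-y‖^2/b) := by ring
    have e3 : -(γ/2)*‖x-y‖^2/(a+b) = -((γ/2)*(‖x-y‖^2/(a+b))) := by ring
    have e4 : ∑ i, -(α+β)*(w i - ζ i)^2 = -∑ i, (α+β)*(w i - ζ i)^2 := by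
      rw [← Finset.sum_neg_distrib]; congr 1; funext i; ring
    rw [e1, e2, e3, e4]
    have part1' : (γ/2)*(‖x-y‖^2/(a+b)) ≤ (γ/2)*(‖x-w‖^2/a) + (γ/2)*(‖w-y‖^2/b) := by
      calc (γ/2)*(‖x-y‖^2/(a+b)) ≤ (γ/2)*(‖x-w‖^2/a + ‖w-y‖^2/b) := part1
        _ = (γ/2)*(‖x-w‖^2/a) + (γ/2)*(‖w-y‖^2/b) := by ring
    linarith [part1', part2]
  have hMint : Integrable (fun w : Fin n → ℝ =>
      exp (-(γ/2)*‖x-y‖^2/(a+b)) * ∏ i, exp (-(α+β)*(w i - ζ i)^2)) := by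
    apply Integrable.const_mul
    exact Integrable.fintype_prod (f := fun i t => exp (-(α+β)*(t - ζ i)^2))
      (fun i => gauss_shift_integrable hd (ζ i))
  have hMnn : 0 ≤ᵐ[(volume : Measure (Fin n → ℝ))] (fun w : Fin n → ℝ =>
      exp (-(γ/2)*‖x-y‖^2/(a+b)) * ∏ i, exp (-(α+β)*(w i - ζ i)^2)) := by
    filter_upwards with w
    positivity
  calc ∫⁻ w : Fin n → ℝ, ENNReal.ofReal (exp (-γ*‖x-w‖^2/a) * exp (-γ*‖w-y‖^2/b))
      ≤ ∫⁻ w : Fin n → ℝ, ENNReal.ofReal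
          (exp (-(γ/2)*‖x-y‖^2/(a+b)) * ∏ i, exp (-(α+β)*(w i - ζ i)^2)) :=
        lintegral_mono fun w => ENNReal.ofReal_le_ofReal (hpoint w)
    _ = ENNReal.ofReal (∫ w : Fin n → ℝ,
          exp (-(γ/2)*‖x-y‖^2/(a+b)) * ∏ i, exp (-(α+β)*(w i - ζ i)^2)) :=
        (ofReal_integral_eq_lintegral_ofReal hMint hMnn).symm
    _ ≤ ENNReal.ofReal ((2*π*(n:ℝ)*a*b/(γ*(a+b)))^((n:ℝ)/2) * exp (-(γ/2)*‖x-y‖^2/(a+b))) := by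
        apply ENNReal.ofReal_le_ofReal
        rw [MeasureTheory.integral_const_mul]
        rw [integral_fintype_prod_volume_eq_prod (f := fun (i : Fin n) (t : ℝ) => exp (-(α+β)*(t - ζ i)^2))]
        have hprod : ∀ i : Fin n, (∫ t : ℝ, exp (-(α+β)*(t - ζ i)^2)) = Real.sqrt (π/(α+β)) :=
          fun i => gauss_shift_integral (α+β) (ζ i)
        simp only [hprod, Finset.prod_const, Finset.card_univ, Fintype.card_fin]
        have hbase : π/(α+β) = 2*π*(n:ℝ)*a*b/(γ*(a+b)) := by
          rw [hαdef, hβdef]; field_simp; ring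
        have hsq : Real.sqrt (π/(α+β)) ^ n = (π/(α+β))^((n:ℝ)/2) := by
          rw [Real.sqrt_eq_rpow, ← Real.rpow_natCast ((π/(α+β))^((1:ℝ)/2)) n,
            ← Real.rpow_mul (by positivity)]
          congr 1
          ring
        rw [hsq, hbase, mul_comm]

/-- The iterated bound. -/
noncomputable def gBnd (n : ℕ) (K γ lam : ℝ) (j : ℕ)
    (p q : (Fin n → ℝ) × ℝ) : ℝ :=
  if 0 < p.2 - q.2 then
    K * lam ^ (-(2*(j+1)) : ℤ) * (p.2 - q.2) ^ (-(n : ℝ) / 2 + j) *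
      Real.exp (-(p.2 - q.2) / lam ^ 2) *
      Real.exp (-γ * ‖p.1 - q.1‖ ^ 2 / (p.2 - q.2))
  else 0

lemma gaussKer_nonneg {n : ℕ} {C c lam : ℝ} (hC : 0 ≤ C) (hlam : 0 < lam)
    (p q : (Fin n → ℝ) × ℝ) : 0 ≤ gaussKer n C c lam p q := by
  unfold gaussKer; split
  · positivity
  · exact le_refl 0

lemma gBnd_nonneg {n : ℕ} {K γ lam : ℝ} (hK : 0 ≤ K) (hlam : 0 < lam) (j : ℕ)
    (p q : (Fin n → ℝ) × ℝ) : 0 ≤ gBnd n K γ lam j p q := by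
  unfold gBnd; split
  · positivity
  · exact le_refl 0

lemma meas_gaussKer {n : ℕ} (C c lam : ℝ) (p : (Fin n → ℝ) × ℝ) :
    Measurable fun z : (Fin n → ℝ) × ℝ => gaussKer n C c lam p z := by
  unfold gaussKer
  apply Measurable.ite
  · exact measurableSet_lt measurable_const (measurable_const.sub measurable_snd)
  · apply Measurable.mul
    apply Measurable.mul
    apply Measurable.mul measurable_const
    · measurability
    · measurability
    · apply Real.continuous_exp.measurable.comp
      apply Measurable.div
      · exact (measurable_const.mul (((continuous_const.sub continuous_fst).norm.pow 2).measurable))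
      · exact measurable_const.sub measurable_snd
  · exact measurable_const

lemma meas_gBnd {n : ℕ} (K γ lam : ℝ) (j : ℕ) (q : (Fin n → ℝ) × ℝ) :
    Measurable fun z : (Fin n → ℝ) × ℝ => gBnd n K γ lam j z q := by
  unfold gBnd
  apply Measurable.ite
  · exact measurableSet_lt measurable_const (measurable_snd.sub measurable_const)
  · apply Measurable.mul
    apply Measurable.mul
    apply Measurable.mul measurable_const
    · measurability
    · measurability
    · apply Real.continuous_exp.measurable.comp
      apply Measurable.div
      · exact (measurable_const.mul (((continuous_fst.sub continuous_const).norm.pow 2).measurable))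
      · exact measurable_snd.sub measurable_const
  · exact measurable_const

lemma alg1 (n j : ℕ) {γ a b : ℝ} (hγ : 0 < γ) (ha : 0 < a) (hb : 0 < b) :
    a^(-(n:ℝ)/2) * b^(-(n:ℝ)/2 + (j:ℝ)) * (2*π*(n:ℝ)*a*b/(γ*(a+b)))^((n:ℝ)/2)
      = (2*π*(n:ℝ)/γ)^((n:ℝ)/2) * (a+b)^(-(n:ℝ)/2) * b^j := by
  have hab : 0 < a + b := by linarith
  have h2 : (2*π*(n:ℝ)*a*b/(γ*(a+b))) = (2*π*(n:ℝ)/γ) * a * b * (a+b)⁻¹ := by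
    field_simp
  rw [h2]
  rw [Real.mul_rpow (by positivity) (by positivity)]
  rw [Real.mul_rpow (by positivity) (by positivity)]
  rw [Real.mul_rpow (by positivity) (by positivity)]
  rw [Real.inv_rpow hab.le, ← Real.rpow_neg hab.le]
  rw [Real.rpow_add hb, Real.rpow_natCast]
  have haa : a^(-(n:ℝ)/2) * a^((n:ℝ)/2) = 1 := by
    rw [← Real.rpow_add ha, neg_div, neg_add_cancel, Real.rpow_zero]
  have hbb : b^(-(n:ℝ)/2) * b^((n:ℝ)/2) = 1 := by
    rw [← Real.rpow_add hb, neg_div, neg_add_cancel, Real.rpow_zero]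
  have hneg : (a+b)^(-((n:ℝ)/2)) = (a+b)^(-(n:ℝ)/2) := by rw [neg_div]
  rw [hneg]
  calc a^(-(n:ℝ)/2) * (b^(-(n:ℝ)/2) * b^j) *
        ((2*π*(n:ℝ)/γ)^((n:ℝ)/2) * a^((n:ℝ)/2) * b^((n:ℝ)/2) * (a+b)^(-(n:ℝ)/2))
      = (a^(-(n:ℝ)/2) * a^((n:ℝ)/2)) * (b^(-(n:ℝ)/2) * b^((n:ℝ)/2)) *
        ((2*π*(n:ℝ)/γ)^((n:ℝ)/2) * (a+b)^(-(n:ℝ)/2) * b^j) := by ring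
    _ = (2*π*(n:ℝ)/γ)^((n:ℝ)/2) * (a+b)^(-(n:ℝ)/2) * b^j := by rw [haa, hbb]; ring

lemma inner_bound (n : ℕ) (hn : 1 ≤ n) {c γ a b : ℝ} (hγ : 0 < γ) (hγc : γ ≤ c)
    (ha : 0 < a) (hb : 0 < b) (A : ℝ) (hA : 0 ≤ A) (x y : Fin n → ℝ) :
    ∫⁻ w : Fin n → ℝ, ENNReal.ofReal
        (A * (Real.exp (-c*‖x-w‖^2/a) * Real.exp (-γ*‖w-y‖^2/b)))
      ≤ ENNReal.ofReal (A * ((2*π*(n:ℝ)*a*b/(γ*(a+b)))^((n:ℝ)/2) *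
          Real.exp (-(γ/2)*‖x-y‖^2/(a+b)))) := by
  calc ∫⁻ w : Fin n → ℝ, ENNReal.ofReal
        (A * (Real.exp (-c*‖x-w‖^2/a) * Real.exp (-γ*‖w-y‖^2/b)))
      = ENNReal.ofReal A * ∫⁻ w : Fin n → ℝ, ENNReal.ofReal
          (Real.exp (-c*‖x-w‖^2/a) * Real.exp (-γ*‖w-y‖^2/b)) := by
        simp_rw [ENNReal.ofReal_mul hA]
        exact lintegral_const_mul' _ _ ENNReal.ofReal_ne_top
    _ ≤ ENNReal.ofReal A * ∫⁻ w : Fin n → ℝ, ENNReal.ofReal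
          (Real.exp (-γ*‖x-w‖^2/a) * Real.exp (-γ*‖w-y‖^2/b)) := by
        apply mul_le_mul_right
        apply lintegral_mono
        intro w
        apply ENNReal.ofReal_le_ofReal
        apply mul_le_mul_of_nonneg_right _ (Real.exp_nonneg _)
        apply Real.exp_le_exp.2
        have h1 : γ*‖x-w‖^2 ≤ c*‖x-w‖^2 :=
          mul_le_mul_of_nonneg_right hγc (sq_nonneg _)
        have h2 : -c*‖x-w‖^2 ≤ -γ*‖x-w‖^2 := by linarith
        exact div_le_div_of_nonneg_right h2 ha.le
    _ ≤ ENNReal.ofReal A * ENNReal.ofReal ((2*π*(n:ℝ)*a*b/(γ*(a+b)))^((n:ℝ)/2) *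
          Real.exp (-(γ/2)*‖x-y‖^2/(a+b))) :=
        mul_le_mul_right (pi_gauss_conv n hn hγ ha hb x y) _
    _ = ENNReal.ofReal (A * ((2*π*(n:ℝ)*a*b/(γ*(a+b)))^((n:ℝ)/2) *
          Real.exp (-(γ/2)*‖x-y‖^2/(a+b)))) := (ENNReal.ofReal_mul hA).symm


lemma step (n : ℕ) (hn : 1 ≤ n) {C c K γ lam : ℝ} (hC : 0 < C) (hc : 0 < c) (hK : 0 < K)
    (hγ : 0 < γ) (hγc : γ ≤ c) (hlam : 0 < lam) (j : ℕ) (p q : (Fin n → ℝ) × ℝ)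
    (ht : 0 < p.2 - q.2) :
    ∫⁻ z : (Fin n → ℝ) × ℝ, ENNReal.ofReal (gaussKer n C c lam p z * gBnd n K γ lam j z q)
      ≤ ENNReal.ofReal (gBnd n (C*K*(2*π*(n:ℝ)/γ)^((n:ℝ)/2)/(j+1)) (γ/2) lam (j+1) p q) := by
  obtain ⟨x, t⟩ := p
  obtain ⟨y, s⟩ := q
  simp only at ht ⊢
  have hst : s < t := by linarith
  set Cst : ℝ := C*K * lam^(-(2*((j:ℤ)+2))) * Real.exp (-(t-s)/lam^2) *
      (2*π*(n:ℝ)/γ)^((n:ℝ)/2) * (t-s)^(-(n:ℝ)/2) *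
      Real.exp (-(γ/2)*‖x-y‖^2/(t-s)) with hCst
  have hCstpos : 0 < Cst := by rw [hCst]; positivity
  have hmeas : Measurable fun z : (Fin n → ℝ) × ℝ =>
      ENNReal.ofReal (gaussKer n C c lam (x, t) z * gBnd n K γ lam j z (y, s)) :=
    ENNReal.measurable_ofReal.comp ((meas_gaussKer C c lam (x, t)).mul (meas_gBnd K γ lam j (y, s)))
  rw [MeasureTheory.Measure.volume_eq_prod, MeasureTheory.lintegral_prod_symm' _ hmeas]
  have key : ∀ τ : ℝ,
      (∫⁻ w : Fin n → ℝ, ENNReal.ofReal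
        (gaussKer n C c lam (x, t) (w, τ) * gBnd n K γ lam j (w, τ) (y, s)))
      ≤ (Set.Ioo s t).indicator (fun τ => ENNReal.ofReal (Cst * (τ - s)^j)) τ := by
    intro τ
    by_cases hτ : τ ∈ Set.Ioo s t
    · obtain ⟨hs1, ht1⟩ := hτ
      have ha : 0 < t - τ := by linarith
      have hb : 0 < τ - s := by linarith
      have hab : (t - τ) + (τ - s) = t - s := by ring
      rw [Set.indicator_of_mem (Set.mem_Ioo.2 ⟨hs1, ht1⟩)]
      have hrw : ∀ w : Fin n → ℝ,
          gaussKer n C c lam (x, t) (w, τ) * gBnd n K γ lam j (w, τ) (y, s)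
          = (C * lam ^ (-2 : ℤ) * (t - τ) ^ (-(n : ℝ) / 2) * Real.exp (-(t-τ)/lam^2) *
              (K * lam ^ (-(2*(j+1)) : ℤ) * (τ - s) ^ (-(n : ℝ) / 2 + j) *
               Real.exp (-(τ-s)/lam^2))) *
            (Real.exp (-c * ‖x - w‖^2 / (t - τ)) * Real.exp (-γ * ‖w - y‖^2 / (τ - s))) := by
        intro w
        simp only [gaussKer, gBnd, if_pos ha, if_pos hb]
        ring
      simp only [hrw]
      refine le_trans (inner_bound n hn hγ hγc ha hb _ (by positivity) x y) ?_
      apply ENNReal.ofReal_le_ofReal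
      apply le_of_eq
      have e_exp : Real.exp (-(t-τ)/lam^2) * Real.exp (-(τ-s)/lam^2)
          = Real.exp (-(t-s)/lam^2) := by
        rw [← Real.exp_add]; congr 1; ring
      have e_lam : lam^(-2:ℤ) * lam^(-(2*(j+1)):ℤ) = lam^(-(2*((j:ℤ)+2))) := by
        rw [← zpow_add₀ (ne_of_gt hlam)]; congr 1; ring
      have e_rpow := alg1 n j hγ ha hb
      calc (C * lam ^ (-2 : ℤ) * (t - τ) ^ (-(n : ℝ) / 2) * Real.exp (-(t-τ)/lam^2) *
              (K * lam ^ (-(2*(j+1)) : ℤ) * (τ - s) ^ (-(n : ℝ) / 2 + j) *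
               Real.exp (-(τ-s)/lam^2))) *
            ((2*π*(n:ℝ)*(t-τ)*(τ-s)/(γ*((t-τ)+(τ-s))))^((n:ℝ)/2) *
             Real.exp (-(γ/2)*‖x-y‖^2/((t-τ)+(τ-s))))
          = ((t - τ) ^ (-(n : ℝ) / 2) * (τ - s) ^ (-(n : ℝ) / 2 + (j:ℝ)) *
             (2*π*(n:ℝ)*(t-τ)*(τ-s)/(γ*((t-τ)+(τ-s))))^((n:ℝ)/2)) *
            (Real.exp (-(t-τ)/lam^2) * Real.exp (-(τ-s)/lam^2)) *
            (lam^(-2:ℤ) * lam^(-(2*(j+1)):ℤ)) * (C*K) *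
            Real.exp (-(γ/2)*‖x-y‖^2/((t-τ)+(τ-s))) := by ring
        _ = ((2*π*(n:ℝ)/γ)^((n:ℝ)/2) * ((t-τ)+(τ-s))^(-(n:ℝ)/2) * (τ-s)^j) *
            Real.exp (-(t-s)/lam^2) * lam^(-(2*((j:ℤ)+2))) * (C*K) *
            Real.exp (-(γ/2)*‖x-y‖^2/((t-τ)+(τ-s))) := by rw [e_rpow, e_exp, e_lam]
        _ = Cst * (τ-s)^j := by rw [hCst, hab]; ring
    · rw [Set.indicator_of_notMem hτ]
      have hzero : ∀ w : Fin n → ℝ,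
          gaussKer n C c lam (x, t) (w, τ) * gBnd n K γ lam j (w, τ) (y, s) = 0 := by
        intro w
        rcases lt_or_ge s τ with h1 | h1
        · have h2 : ¬ (0 < t - τ) := by
            simp only [Set.mem_Ioo, not_and, not_lt] at hτ
            have := hτ h1; linarith
          simp only [gaussKer, if_neg h2]; ring
        · have h2 : ¬ (0 < τ - s) := by linarith
          simp only [gBnd, if_neg h2]; ring
      simp only [hzero, ENNReal.ofReal_zero, lintegral_zero, le_refl]
  have hint : IntegrableOn (fun τ => Cst * (τ - s)^j) (Set.Ioo s t) volume :=
    ((continuous_const.mul ((continuous_id.sub continuous_const).pow j)).integrableOn_Icc).mono_set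
      Set.Ioo_subset_Icc_self
  have hnn : 0 ≤ᵐ[volume.restrict (Set.Ioo s t)] fun τ => Cst * (τ-s)^j := by
    refine (ae_restrict_iff' measurableSet_Ioo).2 (Filter.Eventually.of_forall fun τ hτ => ?_)
    have h1 : 0 < τ - s := sub_pos.2 hτ.1
    positivity
  have hIoo : ∫ τ in Set.Ioo s t, Cst * (τ-s)^j = Cst * ((t-s)^(j+1)/((j:ℝ)+1)) := by
    have h0 : ∫ τ in Set.Ioo s t, Cst * (τ-s)^j = ∫ τ in s..t, Cst * (τ-s)^j := by
      rw [intervalIntegral.integral_of_le hst.le, integral_Ioc_eq_integral_Ioo]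
    rw [h0, intervalIntegral.integral_const_mul]
    congr 1
    have h3 := intervalIntegral.integral_comp_sub_right (f := fun u : ℝ => u^j) (a := s) (b := t) s
    rw [h3]
    simp [integral_pow]
  calc ∫⁻ τ : ℝ, ∫⁻ w : Fin n → ℝ, ENNReal.ofReal
        (gaussKer n C c lam (x, t) (w, τ) * gBnd n K γ lam j (w, τ) (y, s))
      ≤ ∫⁻ τ : ℝ, (Set.Ioo s t).indicator (fun τ => ENNReal.ofReal (Cst * (τ - s)^j)) τ :=
        lintegral_mono key
    _ = ∫⁻ τ in Set.Ioo s t, ENNReal.ofReal (Cst * (τ - s)^j) :=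
        lintegral_indicator measurableSet_Ioo _
    _ = ENNReal.ofReal (∫ τ in Set.Ioo s t, Cst * (τ-s)^j) :=
        (ofReal_integral_eq_lintegral_ofReal hint hnn).symm
    _ = ENNReal.ofReal (Cst * ((t-s)^(j+1)/((j:ℝ)+1))) := by rw [hIoo]
    _ = ENNReal.ofReal (gBnd n (C*K*(2*π*(n:ℝ)/γ)^((n:ℝ)/2)/(j+1)) (γ/2) lam (j+1) (x,t) (y,s)) := by
        congr 1
        simp only [gBnd, if_pos ht]
        have hz : lam ^ (-(2*((j:ℕ)+1+1)) : ℤ) = lam ^ (-(2*((j:ℤ)+2))) := by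
          rfl
        have hr : (t-s) ^ (-(n:ℝ)/2 + ((j:ℕ)+1 : ℕ)) = (t-s) ^ (-(n:ℝ)/2) * (t-s)^(j+1) := by
          rw [Real.rpow_add ht, Real.rpow_natCast]
        rw [hCst]
        push_cast
        rw [Real.rpow_add ht]
        rw [show ((j:ℝ)+1) = (((j+1 : ℕ)):ℝ) by push_cast; ring, Real.rpow_natCast]
        push_cast
        ring

lemma key_induction (n : ℕ) (hn : 1 ≤ n) (C c : ℝ) (hC : 0 < C) (hc : 0 < c) (j : ℕ) :
    ∃ K γ : ℝ, 0 < K ∧ 0 < γ ∧ γ ≤ c ∧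
      ∀ lam : ℝ, 0 < lam → ∀ p q : (Fin n → ℝ) × ℝ,
        0 ≤ iterConv (gaussKer n C c lam) j p q ∧
        iterConv (gaussKer n C c lam) j p q ≤ gBnd n K γ lam j p q := by
  induction j with
  | zero =>
      refine ⟨C, c, hC, hc, le_refl c, fun lam hlam p q => ⟨gaussKer_nonneg hC.le hlam p q, ?_⟩⟩
      apply le_of_eq
      show gaussKer n C c lam p q = _
      unfold gaussKer gBnd
      norm_num
  | succ j ih =>
      obtain ⟨K, γ, hK, hγ, hγc, hIH⟩ := ih
      refine ⟨C*K*(2*π*(n:ℝ)/γ)^((n:ℝ)/2)/(j+1), γ/2, by positivity, by positivity,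
        by linarith, ?_⟩
      intro lam hlam p q
      have hnn0 : ∀ z, 0 ≤ gaussKer n C c lam p z * iterConv (gaussKer n C c lam) j z q :=
        fun z => mul_nonneg (gaussKer_nonneg hC.le hlam p z) (hIH lam hlam z q).1
      constructor
      · exact integral_nonneg hnn0
      · show (∫ z : (Fin n → ℝ) × ℝ,
            gaussKer n C c lam p z * iterConv (gaussKer n C c lam) j z q) ≤ _
        by_cases ht : 0 < p.2 - q.2
        · set g := fun z : (Fin n → ℝ) × ℝ =>
            gaussKer n C c lam p z * gBnd n K γ lam j z q with hg
          have hgmeas : Measurable g :=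
            (meas_gaussKer C c lam p).mul (meas_gBnd K γ lam j q)
          have hgnn : ∀ z, 0 ≤ g z := fun z =>
            mul_nonneg (gaussKer_nonneg hC.le hlam p z) (gBnd_nonneg hK.le hlam j z q)
          have hlin := step n hn hC hc hK hγ hγc hlam j p q ht
          have hfin : (∫⁻ z, ENNReal.ofReal (g z)) < ⊤ :=
            lt_of_le_of_lt hlin ENNReal.ofReal_lt_top
          have hgint : Integrable g := by
            refine ⟨hgmeas.aestronglyMeasurable, ?_⟩
            rw [hasFiniteIntegral_iff_ofReal (Filter.Eventually.of_forall hgnn)]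
            exact hfin
          have hmono : (fun z => gaussKer n C c lam p z * iterConv (gaussKer n C c lam) j z q)
              ≤ᵐ[volume] g :=
            Filter.Eventually.of_forall fun z =>
              mul_le_mul_of_nonneg_left (hIH lam hlam z q).2 (gaussKer_nonneg hC.le hlam p z)
          calc (∫ z : (Fin n → ℝ) × ℝ,
                gaussKer n C c lam p z * iterConv (gaussKer n C c lam) j z q)
              ≤ ∫ z, g z :=
                integral_mono_of_nonneg (Filter.Eventually.of_forall hnn0) hgint hmono
            _ = (∫⁻ z, ENNReal.ofReal (g z)).toReal := by
                rw [integral_eq_lintegral_of_nonneg_ae (Filter.Eventually.of_forall hgnn)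
                  hgmeas.aestronglyMeasurable]
            _ ≤ (ENNReal.ofReal (gBnd n (C*K*(2*π*(n:ℝ)/γ)^((n:ℝ)/2)/(j+1)) (γ/2) lam (j+1)
                  p q)).toReal := ENNReal.toReal_mono ENNReal.ofReal_ne_top hlin
            _ = gBnd n (C*K*(2*π*(n:ℝ)/γ)^((n:ℝ)/2)/(j+1)) (γ/2) lam (j+1) p q :=
                ENNReal.toReal_ofReal (gBnd_nonneg (by positivity) hlam (j+1) p q)
        · have hzero : ∀ z : (Fin n → ℝ) × ℝ,
              gaussKer n C c lam p z * iterConv (gaussKer n C c lam) j z q = 0 := by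
            intro z
            rcases le_or_gt z.2 q.2 with h1 | h1
            · have h2 : ¬ (0 < z.2 - q.2) := by push_neg; linarith
              have h3 : gBnd n K γ lam j z q = 0 := by rw [gBnd, if_neg h2]
              have h4 : iterConv (gaussKer n C c lam) j z q = 0 :=
                le_antisymm (h3 ▸ (hIH lam hlam z q).2) ((hIH lam hlam z q).1)
              rw [h4, mul_zero]
            · have h2 : ¬ (0 < p.2 - z.2) := by push_neg at ht ⊢; linarith
              rw [gaussKer, if_neg h2, zero_mul]
          rw [funext hzero]
          rw [integral_zero]
          exact gBnd_nonneg (by positivity) hlam (j+1) p q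

/-- the `m`-fold self-convolution of the Gaussian kernel bound
satisfies the corresponding bound with an extra factor `(t-s)^{m-1}` and
constants depending only on `n, m, C, c`. -/
theorem stmt4 (n : ℕ) (hn : 1 ≤ n) (C c : ℝ) (hC : 0 < C) (hc : 0 < c)
    (m : ℕ) (hm : 1 ≤ m) :
    ∃ C' c' : ℝ, 0 < C' ∧ 0 < c' ∧
      ∀ lam : ℝ, 0 < lam → ∀ p q : (Fin n → ℝ) × ℝ,
        iterConv (gaussKer n C c lam) (m - 1) p q ≤
          (if 0 < p.2 - q.2 then
            C' * lam ^ (-(2 * m : ℤ)) * (p.2 - q.2) ^ (-(n : ℝ) / 2 + m - 1) *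
              Real.exp (-(p.2 - q.2) / lam ^ 2) *
              Real.exp (-c' * ‖p.1 - q.1‖ ^ 2 / (p.2 - q.2))
          else 0) := by
  obtain ⟨K, γ, hK, hγ, hγc, h⟩ := key_induction n hn C c hC hc (m - 1)
  refine ⟨K, γ, hK, hγ, fun lam hlam p q => ?_⟩
  refine le_trans (h lam hlam p q).2 (le_of_eq ?_)
  unfold gBnd
  split_ifs with h3
  · have e1 : lam ^ (-(2*((m-1 : ℕ)+1)) : ℤ) = lam ^ (-(2 * m : ℤ)) := by
      congr 1; omega
    have e2 : (-(n:ℝ)/2 + ((m-1 : ℕ) : ℝ)) = (-(n:ℝ)/2 + m - 1) := by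
      rw [Nat.cast_sub hm]; push_cast; ring
    rw [e1, e2]
  · rfl
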